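/- The subgroup ⟨φ, B⟩ of the automorphism group of k[x1,x2,x3] is contained in the set of compositions B ∘ {φ_u : u ∈ k} (where φ_0 := id), and ⟨φ, B⟩ ∩ Aff_3(k) = B; in particular, φ_u ∉ Aff_3(k) for every u ∈ k^*. -/

import Mathlib

open MvPolynomial

noncomputable section

namespace YasudaPaper

variable {k : Type*} [Field k]

/-- `f := x1*x3 - x2^2` (variables: `X 0 = x1, X 1 = x2, X 2 = x3`). -/
def fP : MvPolynomial (Fin 3) k := X 0 * X 2 - X 1 ^ 2

/-- `r := x2*f + x1^2`. -/
def rP : MvPolynomial (Fin 3) k := X 1 * fP + X 0 ^ 2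

/-- `g := x3*f^2 + 2*x1*x2*f + x1^3`. -/
def gP : MvPolynomial (Fin 3) k := X 2 * fP ^ 2 + 2 * X 0 * X 1 * fP + X 0 ^ 3

/-- The Jacobian derivation `Δ = Δ_{(f,g)}`, `h ↦ det ∂(f,g,h)/∂(x1,x2,x3)`. -/
def Del (h : MvPolynomial (Fin 3) k) : MvPolynomial (Fin 3) k :=
  Matrix.det !![pderiv 0 fP, pderiv 1 fP, pderiv 2 fP;
                pderiv 0 gP, pderiv 1 gP, pderiv 2 gP;
                pderiv 0 h,  pderiv 1 h,  pderiv 2 h]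

/-- `φ = exp D`: for every `h` and every `N` with `D^[N] h = 0`,
    `φ h = ∑_{i<N} D^i(h)/i!`.  (For a locally nilpotent `D` this characterizes
    the exponential automorphism.) -/
def IsExpOf {σ : Type*} (D : MvPolynomial σ k → MvPolynomial σ k)
    (φ : MvPolynomial σ k ≃ₐ[k] MvPolynomial σ k) : Prop :=
  ∀ (h : MvPolynomial σ k) (N : ℕ), D^[N] h = 0 →
    φ h = ∑ i ∈ Finset.range N, (Nat.factorial i : k)⁻¹ • D^[i] h

/-- `α` is an affine automorphism: `α(x_i) = ∑_j a_{j,i} x_j + b_i` with `A ∈ GL₃(k)`. -/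
def IsAffine (α : MvPolynomial (Fin 3) k ≃ₐ[k] MvPolynomial (Fin 3) k) : Prop :=
  ∃ (A : Matrix (Fin 3) (Fin 3) k) (b : Fin 3 → k), IsUnit A.det ∧
    ∀ i : Fin 3, α (X i) = (∑ j : Fin 3, C (A j i) * X j) + C (b i)

/-- `Aff_3(k)` as a set of automorphisms. -/
def AffSet : Set (MvPolynomial (Fin 3) k ≃ₐ[k] MvPolynomial (Fin 3) k) := {α | IsAffine α}

/-- `α` is a triangular automorphism: `α(x_i) = a_i x_i + f_i(x_1,…,x_{i-1})`, `a_i ≠ 0`. -/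
def IsTriangular (α : MvPolynomial (Fin 3) k ≃ₐ[k] MvPolynomial (Fin 3) k) : Prop :=
  ∃ (a : Fin 3 → k) (p : Fin 3 → MvPolynomial (Fin 3) k),
    (∀ i, a i ≠ 0) ∧ (∀ i, p i ∈ MvPolynomial.supported k {j | j < i}) ∧
    (∀ i, α (X i) = C (a i) * X i + p i)

/-- `BA_3(k)` as a set of automorphisms. -/
def TriSet : Set (MvPolynomial (Fin 3) k ≃ₐ[k] MvPolynomial (Fin 3) k) := {α | IsTriangular α}

/-- The tame subgroup `TA_3(k) = ⟨Aff_3(k), BA_3(k)⟩`. -/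
def TA : Subgroup (MvPolynomial (Fin 3) k ≃ₐ[k] MvPolynomial (Fin 3) k) :=
  Subgroup.closure (AffSet ∪ TriSet)

/-- `β = β_u = (u^3 x1, u^2 x2, u x3)`. -/
def IsBeta (u : k) (β : MvPolynomial (Fin 3) k ≃ₐ[k] MvPolynomial (Fin 3) k) : Prop :=
  β (X 0) = C (u ^ 3) * X 0 ∧ β (X 1) = C (u ^ 2) * X 1 ∧ β (X 2) = C u * X 2

/-- `B = {β_u | u ∈ k^*}`. -/
def BSet : Set (MvPolynomial (Fin 3) k ≃ₐ[k] MvPolynomial (Fin 3) k) :=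
  {β | ∃ u : k, u ≠ 0 ∧ IsBeta u β}

/-! Six-variable ring `k[x1,x2,x3,t_r,t_f,t_g]`:
variables `X 0 = x1, X 1 = x2, X 2 = x3, X 3 = t_r, X 4 = t_f, X 5 = t_g`. -/

/-- The inclusion of variable index sets. -/
def ι36 : Fin 3 → Fin 6 := Fin.castLE (by norm_num)

/-- The embedding `k[x1,x2,x3] → k[x1,x2,x3,t_r,t_f,t_g]`. -/
def embP : MvPolynomial (Fin 3) k →ₐ[k] MvPolynomial (Fin 6) k := rename ι36

/-- The substitution map `π : t_r ↦ r, t_f ↦ f, t_g ↦ g` (fixing `x1,x2,x3`). -/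
def piMap : MvPolynomial (Fin 6) k →ₐ[k] MvPolynomial (Fin 3) k :=
  aeval ![X 0, X 1, X 2, rP, fP, gP]

/-- The triangular derivation
`Δ' = -2 t_r t_f ∂/∂x1 + (4 x1 t_r - t_g) ∂/∂x2 + (6 x2 t_r + 2 t_f²) ∂/∂x3 - t_f t_g ∂/∂t_r`. -/
def Del' (p : MvPolynomial (Fin 6) k) : MvPolynomial (Fin 6) k :=
  (-(2 * X 3 * X 4)) * pderiv 0 p + (4 * X 0 * X 3 - X 5) * pderiv 1 p +
  (6 * X 1 * X 3 + 2 * X 4 ^ 2) * pderiv 2 p + (-(X 4 * X 5)) * pderiv 3 p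

/-- The weight `w1 = (1,2,3,1,0,1)`. -/
def w1 : Fin 6 → ℕ := ![1, 2, 3, 1, 0, 1]

/-- The weight `w2 = (0,0,0,0,1,0)`. -/
def w2 : Fin 6 → ℕ := ![0, 0, 0, 0, 1, 0]

/-- The sixth cyclic lexicographic order on exponent vectors: first compare the
exponent of `t_g`, then lexicographically the exponents of `x1,x2,x3,t_r,t_f`. -/
def cyclicLt (a b : Fin 6 →₀ ℕ) : Prop :=
  a 5 < b 5 ∨ (a 5 = b 5 ∧ ∃ m : Fin 5,
    (∀ l : Fin 5, l < m → a l.castSucc = b l.castSucc) ∧ a m.castSucc < b m.castSucc)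

/-- The leading monomial of `p` (for the sixth cyclic lexicographic order) is `m`. -/
def LeadMonIs (p : MvPolynomial (Fin 6) k) (m : Fin 6 →₀ ℕ) : Prop :=
  m ∈ p.support ∧ ∀ m' ∈ p.support, m' ≠ m → cyclicLt m' m

/-- The exponent vector of the monomial `t_f^δ t_g^γ`. -/
def tfMon (γ δ : ℕ) : Fin 6 →₀ ℕ := Finsupp.single 4 δ + Finsupp.single 5 γ

/-- The set `P_{γ,δ}`. -/
def Pset (γ δ : ℕ) : Set (MvPolynomial (Fin 6) k) :=
  {p | p ≠ 0 ∧ weightedTotalDegree w1 p ≤ γ ∧ weightedTotalDegree w2 p ≤ δ ∧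
    LeadMonIs p (tfMon γ δ)}

/-- `α'` is a lift of `α`. -/
def IsLift (α : MvPolynomial (Fin 3) k ≃ₐ[k] MvPolynomial (Fin 3) k)
    (α' : MvPolynomial (Fin 6) k →ₐ[k] MvPolynomial (Fin 6) k) : Prop :=
  (∀ i : Fin 3, α' (X (ι36 i)) = embP (α (X i))) ∧
  (∀ p, piMap (α' p) = α (piMap p))

/-- `t = γ_j = max {i | a_{i,j} ≠ 0}` (with rows indexed `1,2,3`). -/
def TypeIs (A : Matrix (Fin 3) (Fin 3) k) (j : Fin 3) (t : ℕ) : Prop :=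
  ∃ i : Fin 3, t = (i : ℕ) + 1 ∧ A i j ≠ 0 ∧ ∀ i' : Fin 3, i < i' → A i' j = 0

/-- Condition (C) for a lift `α'` of an affine automorphism of type `(γ1,γ2,γ3)`,
relative to `φ' = exp(uΔ')`. -/
def CondC (γ1 γ2 γ3 : ℕ) (φ' : MvPolynomial (Fin 6) k ≃ₐ[k] MvPolynomial (Fin 6) k)
    (α' : MvPolynomial (Fin 6) k →ₐ[k] MvPolynomial (Fin 6) k) : Prop :=
  ∃ m4 m5 m6 n4 n5 n6 : ℕ,
    1 ≤ n4 ∧ 1 ≤ n5 ∧ 1 ≤ n6 ∧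
    φ' (α' (X 3)) ∈ Pset m4 n4 ∧
    φ' (α' (X 4)) ∈ Pset m5 n5 ∧
    φ' (α' (X 5)) ∈ Pset m6 n6 ∧
    γ1 ≤ m6 ∧ γ2 ≤ 2 * m6 ∧ γ3 ≤ 3 * m6 ∧ m4 ≤ m6 ∧
    γ1 + 1 ≤ n6 - 1 ∧ γ2 + 1 ≤ 2 * (n6 - 1) ∧ γ3 + 1 ≤ 3 * (n6 - 1) ∧ n4 ≤ n6 - 1

/-- The image of `x_j` under the affine map given by `(A, d)`, inside the six-variable ring. -/
def affImg (A : Matrix (Fin 3) (Fin 3) k) (d : Fin 3 → k) (j : Fin 3) :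
    MvPolynomial (Fin 6) k :=
  (∑ i : Fin 3, C (A i j) * X (ι36 i)) + C (d j)

/-- The image of `t_f` under the lift `α̂`:
`α̂(t_f) = α(f) + (a_{1,1}a_{3,3} - 2a_{1,2}a_{3,2} + a_{1,3}a_{3,1})(t_f - f)`. -/
def hatTf (A : Matrix (Fin 3) (Fin 3) k) (d : Fin 3 → k) : MvPolynomial (Fin 6) k :=
  (affImg A d 0 * affImg A d 2 - affImg A d 1 ^ 2) +
    C (A 0 0 * A 2 2 - 2 * (A 0 1 * A 2 1) + A 0 2 * A 2 0) *
      (X 4 - (X 0 * X 2 - X 1 ^ 2))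

/-- The lift `α̂` of the affine automorphism given by `(A, d)`:
`α̂(x_i) = α(x_i)`, `α̂(t_f)` as in `hatTf`, `α̂(t_r) = α̂(x2 t_f + x1²)`,
`α̂(t_g) = α̂(x3 t_f² + 2 x1 x2 t_f + x1³)`. -/
def hatLift (A : Matrix (Fin 3) (Fin 3) k) (d : Fin 3 → k) :
    MvPolynomial (Fin 6) k →ₐ[k] MvPolynomial (Fin 6) k :=
  aeval ![affImg A d 0, affImg A d 1, affImg A d 2,
    affImg A d 1 * hatTf A d + affImg A d 0 ^ 2,
    hatTf A d,
    affImg A d 2 * hatTf A d ^ 2 + 2 * affImg A d 0 * affImg A d 1 * hatTf A d +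
      affImg A d 0 ^ 3]


/-! ### Auxiliary lemmas -/

lemma pderiv_ofNat {σ : Type*} [DecidableEq σ] (i : σ) (n : ℕ) [n.AtLeastTwo] :
    pderiv i (no_index (OfNat.ofNat n) : MvPolynomial σ k) = 0 := by
  have : (OfNat.ofNat n : MvPolynomial σ k) = C (OfNat.ofNat n) := by simp [map_ofNat]
  rw [this, pderiv_C]

lemma Del_add (p q : MvPolynomial (Fin 3) k) : Del (p + q) = Del p + Del q := by
  simp [Del, Matrix.det_fin_three]; ring

lemma Del_smul (c : k) (p : MvPolynomial (Fin 3) k) : Del (c • p) = c • Del p := by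
  simp [Del, Matrix.det_fin_three, smul_eq_C_mul]; ring

lemma Del_zero : Del (0 : MvPolynomial (Fin 3) k) = 0 := by
  simp [Del, Matrix.det_fin_three]

lemma Del_iter_zero (n : ℕ) : Del^[n] (0 : MvPolynomial (Fin 3) k) = 0 := by
  induction n with
  | zero => rfl
  | succ n ih => rw [Function.iterate_succ_apply, Del_zero, ih]

lemma Del_iter_smul (c : k) (n : ℕ) (p : MvPolynomial (Fin 3) k) :
    Del^[n] (c • p) = c • Del^[n] p := by
  induction n generalizing p with
  | zero => rfl
  | succ n ih => rw [Function.iterate_succ_apply, Del_smul, ih, Function.iterate_succ_apply]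

lemma smulDel_iter (u : k) (n : ℕ) (p : MvPolynomial (Fin 3) k) :
    (fun h => u • Del h)^[n] p = u ^ n • Del^[n] p := by
  induction n generalizing p with
  | zero => simp
  | succ n ih =>
    rw [Function.iterate_succ_apply, ih, Del_iter_smul, Function.iterate_succ_apply,
      smul_smul, pow_succ, mul_comm]

lemma Del_iter_ge {h : MvPolynomial (Fin 3) k} {N m : ℕ} (hN : Del^[N] h = 0) (hm : N ≤ m) :
    Del^[m] h = 0 := by
  rw [← Nat.sub_add_cancel hm, Function.iterate_add_apply, hN, Del_iter_zero]

lemma Phi_apply {u : k} {φ : MvPolynomial (Fin 3) k ≃ₐ[k] MvPolynomial (Fin 3) k}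
    (hφ : IsExpOf (fun h => u • Del h) φ) (h : MvPolynomial (Fin 3) k) (N : ℕ)
    (hN : Del^[N] h = 0) :
    φ h = ∑ i ∈ Finset.range N, (u ^ i * (Nat.factorial i : k)⁻¹) • Del^[i] h := by
  rw [hφ h N (by rw [smulDel_iter, hN, smul_zero])]
  refine Finset.sum_congr rfl fun i _ => ?_
  rw [smulDel_iter, smul_smul, mul_comm]

lemma Phi_zero_apply (hln : ∀ h : MvPolynomial (Fin 3) k, ∃ l : ℕ, Del^[l] h = 0)
    {φ : MvPolynomial (Fin 3) k ≃ₐ[k] MvPolynomial (Fin 3) k}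
    (hφ : IsExpOf (fun h => (0 : k) • Del h) φ) (h : MvPolynomial (Fin 3) k) : φ h = h := by
  obtain ⟨N, hN⟩ := hln h
  rw [Phi_apply hφ h N hN]
  cases N with
  | zero =>
    simp only [Function.iterate_zero_apply] at hN
    simp [hN]
  | succ n =>
    rw [Finset.sum_range_succ']
    simp

lemma choose_scalar [CharZero k] (i j : ℕ) (a b : k) :
    (b ^ i * (Nat.factorial i : k)⁻¹) * (a ^ j * (Nat.factorial j : k)⁻¹)
      = (a ^ j * b ^ ((j + i) - j) * ((j + i).choose j : k)) * (Nat.factorial (j + i) : k)⁻¹ := by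
  rw [Nat.add_sub_cancel_left]
  have hc := Nat.choose_mul_factorial_mul_factorial (Nat.le_add_right j i)
  rw [Nat.add_sub_cancel_left] at hc
  have hfi : (Nat.factorial i : k) ≠ 0 := Nat.cast_ne_zero.2 (Nat.factorial_ne_zero i)
  have hfj : (Nat.factorial j : k) ≠ 0 := Nat.cast_ne_zero.2 (Nat.factorial_ne_zero j)
  have hfn : (Nat.factorial (j + i) : k) ≠ 0 := Nat.cast_ne_zero.2 (Nat.factorial_ne_zero _)
  field_simp
  rw [← hc]
  push_cast
  ring

lemma Phi_add [CharZero k] (hln : ∀ h : MvPolynomial (Fin 3) k, ∃ l : ℕ, Del^[l] h = 0)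
    {Φ : k → (MvPolynomial (Fin 3) k ≃ₐ[k] MvPolynomial (Fin 3) k)}
    (hΦ : ∀ u : k, IsExpOf (fun h => u • Del h) (Φ u)) (a b : k)
    (h : MvPolynomial (Fin 3) k) :
    Φ a (Φ b h) = Φ (a + b) h := by
  obtain ⟨N, hN⟩ := hln h
  have key : ∀ i : ℕ, Del^[N] (Del^[i] h) = 0 := fun i => by
    rw [← Function.iterate_add_apply]; exact Del_iter_ge hN (Nat.le_add_right N i)
  rw [Phi_apply (hΦ b) h N hN, map_sum]
  have L : ∀ i : ℕ, (Φ a) ((b ^ i * (Nat.factorial i : k)⁻¹) • Del^[i] h)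
      = ∑ j ∈ Finset.range N,
          ((b ^ i * (Nat.factorial i : k)⁻¹) * (a ^ j * (Nat.factorial j : k)⁻¹))
            • Del^[j + i] h := by
    intro i
    rw [map_smul, Phi_apply (hΦ a) _ N (key i), Finset.smul_sum]
    refine Finset.sum_congr rfl fun j _ => ?_
    rw [smul_smul, ← Function.iterate_add_apply]
  simp only [L]
  rw [Phi_apply (hΦ (a + b)) h N hN]
  have R : ∀ n : ℕ, (((a + b) ^ n * (Nat.factorial n : k)⁻¹) • Del^[n] h)
      = ∑ m ∈ Finset.range (n + 1),
          ((a ^ m * b ^ (n - m) * (n.choose m : k)) * (Nat.factorial n : k)⁻¹) • Del^[n] h := by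
    intro n
    rw [← Finset.sum_smul, ← Finset.sum_mul, add_pow]
  simp only [R]
  rw [Finset.sum_sigma' (Finset.range N) (fun _ => Finset.range N)
    (fun i j => ((b ^ i * (Nat.factorial i : k)⁻¹) * (a ^ j * (Nat.factorial j : k)⁻¹))
      • Del^[j + i] h)]
  rw [Finset.sum_sigma' (Finset.range N) (fun n => Finset.range (n + 1))
    (fun n m => ((a ^ m * b ^ (n - m) * (n.choose m : k)) * (Nat.factorial n : k)⁻¹)
      • Del^[n] h)]
  rw [← Finset.sum_subset
    (Finset.filter_subset (fun p : Σ _ : ℕ, ℕ => p.1 + p.2 < N)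
      ((Finset.range N).sigma fun _ => Finset.range N))
    (by
      intro p hps hp
      have hge : N ≤ p.1 + p.2 := by
        by_contra hlt
        exact hp (Finset.mem_filter.2 ⟨hps, by omega⟩)
      have : Del^[p.2 + p.1] h = 0 := Del_iter_ge hN (by omega)
      rw [this, smul_zero])]
  refine Finset.sum_nbij' (fun p => ⟨p.2 + p.1, p.2⟩) (fun q => ⟨q.1 - q.2, q.2⟩) ?_ ?_ ?_ ?_ ?_
  · intro p hp
    simp only [Finset.mem_filter, Finset.mem_sigma, Finset.mem_range] at hp
    simp only [Finset.mem_sigma, Finset.mem_range]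
    omega
  · intro q hq
    simp only [Finset.mem_sigma, Finset.mem_range] at hq
    simp only [Finset.mem_filter, Finset.mem_sigma, Finset.mem_range]
    omega
  · intro p hp
    simp only [Finset.mem_filter, Finset.mem_sigma, Finset.mem_range] at hp
    have h1 : p.2 + p.1 - p.2 = p.1 := by omega
    exact Sigma.ext (by simp [h1]) (by simp)
  · intro q hq
    simp only [Finset.mem_sigma, Finset.mem_range] at hq
    have h1 : q.2 + (q.1 - q.2) = q.1 := by omega
    exact Sigma.ext (by simp [h1]) (by simp)
  · intro p hp
    rw [choose_scalar]

/-! ### β lemmas -/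

def wN : Fin 3 → ℕ := ![3, 2, 1]

lemma beta_C {β : MvPolynomial (Fin 3) k ≃ₐ[k] MvPolynomial (Fin 3) k} (c : k) :
    β (C c) = C c := by
  rw [← MvPolynomial.algebraMap_eq]; exact β.commutes c

lemma beta_X {u : k} {β : MvPolynomial (Fin 3) k ≃ₐ[k] MvPolynomial (Fin 3) k}
    (hβ : IsBeta u β) (j : Fin 3) : β (X j) = C (u ^ wN j) * X j := by
  fin_cases j
  · simpa [wN] using hβ.1
  · simpa [wN] using hβ.2.1
  · simpa [wN] using hβ.2.2

lemma beta_chain {u : k} {β : MvPolynomial (Fin 3) k ≃ₐ[k] MvPolynomial (Fin 3) k}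
    (hβ : IsBeta u β) (h : MvPolynomial (Fin 3) k) (i : Fin 3) :
    pderiv i (β h) = u ^ wN i • β (pderiv i h) := by
  induction h using MvPolynomial.induction_on with
  | C a => simp [beta_C]
  | add p q hp hq => simp [map_add, hp, hq, smul_add]
  | mul_X p n ih =>
    by_cases hin : i = n
    · subst hin
      simp only [map_mul, beta_X hβ, pderiv_mul, pderiv_C_mul, pderiv_X_self, mul_one, pderiv_C,
        Derivation.leibniz, smul_eq_mul, ih, map_add, smul_add, smul_eq_C_mul, map_mul, beta_C]
      ring
    · simp only [map_mul, beta_X hβ, pderiv_mul, pderiv_C_mul,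
        pderiv_X_of_ne (Ne.symm hin), mul_zero, add_zero, ih, smul_eq_C_mul, map_mul, beta_C,
        pderiv_X_of_ne, mul_zero, pderiv_C]
      ring

set_option maxHeartbeats 1000000 in
lemma beta_Del {u : k} {β : MvPolynomial (Fin 3) k ≃ₐ[k] MvPolynomial (Fin 3) k}
    (hβ : IsBeta u β) (h : MvPolynomial (Fin 3) k) :
    β (Del h) = u ^ 7 • Del (β h) := by
  simp [Del, Matrix.det_fin_three, fP, gP, pderiv_ofNat, map_ofNat,
    beta_chain hβ, beta_X hβ, beta_C, smul_eq_C_mul, wN]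
  ring

lemma beta_Del_iter {u : k} {β : MvPolynomial (Fin 3) k ≃ₐ[k] MvPolynomial (Fin 3) k}
    (hβ : IsBeta u β) (n : ℕ) (h : MvPolynomial (Fin 3) k) :
    β (Del^[n] h) = u ^ (7 * n) • Del^[n] (β h) := by
  induction n generalizing h with
  | zero => simp
  | succ n ih =>
    rw [Function.iterate_succ_apply, ih, beta_Del hβ, Del_iter_smul, smul_smul,
      Function.iterate_succ_apply]
    congr 1
    ring

lemma beta_Phi [CharZero k] (hln : ∀ h : MvPolynomial (Fin 3) k, ∃ l : ℕ, Del^[l] h = 0)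
    {Φ : k → (MvPolynomial (Fin 3) k ≃ₐ[k] MvPolynomial (Fin 3) k)}
    (hΦ : ∀ u : k, IsExpOf (fun h => u • Del h) (Φ u))
    {u : k} {β : MvPolynomial (Fin 3) k ≃ₐ[k] MvPolynomial (Fin 3) k}
    (hu : u ≠ 0) (hβ : IsBeta u β) (v : k) (h : MvPolynomial (Fin 3) k) :
    β (Φ v h) = Φ (v * u ^ 7) (β h) := by
  obtain ⟨N, hN⟩ := hln h
  have hNβ : Del^[N] (β h) = 0 := by
    have := beta_Del_iter hβ N h
    rw [hN, map_zero] at this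
    have hne : (u : k) ^ (7 * N) ≠ 0 := pow_ne_zero _ hu
    exact (smul_eq_zero.1 this.symm).resolve_left hne
  rw [Phi_apply (hΦ v) h N hN, map_sum, Phi_apply (hΦ (v * u ^ 7)) (β h) N hNβ]
  refine Finset.sum_congr rfl fun i _ => ?_
  rw [map_smul, beta_Del_iter hβ, smul_smul]
  congr 1
  rw [mul_pow, ← pow_mul, mul_comm 7 i]
  ring

lemma one_mem_BSet : (1 : MvPolynomial (Fin 3) k ≃ₐ[k] MvPolynomial (Fin 3) k) ∈ BSet := by
  refine ⟨1, one_ne_zero, ?_, ?_, ?_⟩ <;> simp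

lemma BSet_mul {β β' : MvPolynomial (Fin 3) k ≃ₐ[k] MvPolynomial (Fin 3) k}
    (hβ : β ∈ BSet) (hβ' : β' ∈ BSet) : β * β' ∈ BSet := by
  obtain ⟨u, hu, h1, h2, h3⟩ := hβ
  obtain ⟨u', hu', h1', h2', h3'⟩ := hβ'
  refine ⟨u * u', mul_ne_zero hu hu', ?_, ?_, ?_⟩
  · show β (β' (X 0)) = _
    rw [h1', map_mul, beta_C, h1, mul_pow, C_mul]; ring
  · show β (β' (X 1)) = _
    rw [h2', map_mul, beta_C, h2, mul_pow, C_mul]; ring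
  · show β (β' (X 2)) = _
    rw [h3', map_mul, beta_C, h3, C_mul]; ring

lemma BSet_inv {β : MvPolynomial (Fin 3) k ≃ₐ[k] MvPolynomial (Fin 3) k}
    (hβ : β ∈ BSet) : β⁻¹ ∈ BSet := by
  obtain ⟨u, hu, h1, h2, h3⟩ := hβ
  have hinj := β.injective
  have happ : ∀ p, β (β⁻¹ p) = p := fun p => by
    rw [← AlgEquiv.mul_apply, mul_inv_cancel, AlgEquiv.one_apply]
  refine ⟨u⁻¹, inv_ne_zero hu, ?_, ?_, ?_⟩ <;> apply hinj <;> rw [happ]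
  · rw [map_mul, beta_C, h1, ← mul_assoc, ← C_mul]
    rw [show u⁻¹ ^ 3 * u ^ 3 = 1 by field_simp]
    rw [map_one, one_mul]
  · rw [map_mul, beta_C, h2, ← mul_assoc, ← C_mul]
    rw [show u⁻¹ ^ 2 * u ^ 2 = 1 by field_simp]
    rw [map_one, one_mul]
  · rw [map_mul, beta_C, h3, ← mul_assoc, ← C_mul]
    rw [show u⁻¹ * u = 1 by field_simp]
    rw [map_one, one_mul]

lemma beta_affine {β : MvPolynomial (Fin 3) k ≃ₐ[k] MvPolynomial (Fin 3) k}
    (hβ : β ∈ BSet) : IsAffine β := by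
  obtain ⟨u, hu, h1, h2, h3⟩ := hβ
  refine ⟨Matrix.of ![![u ^ 3, 0, 0], ![0, u ^ 2, 0], ![0, 0, u]], ![0, 0, 0], ?_, ?_⟩
  · have : (Matrix.of ![![u ^ 3, 0, 0], ![0, u ^ 2, 0], ![0, 0, u]]).det = u ^ 6 := by
      simp [Matrix.det_fin_three]; ring
    rw [this]
    exact isUnit_iff_ne_zero.2 (pow_ne_zero _ hu)
  · intro i
    fin_cases i <;>
      simp [Fin.sum_univ_three, h1, h2, h3, Matrix.vecHead, Matrix.vecTail]

lemma mul_affine {β θ : MvPolynomial (Fin 3) k ≃ₐ[k] MvPolynomial (Fin 3) k}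
    (hβ : β ∈ BSet) (hθ : IsAffine θ) : IsAffine (β * θ) := by
  obtain ⟨u, hu, hb⟩ := hβ
  obtain ⟨A, b, hdet, haff⟩ := hθ
  refine ⟨Matrix.of (fun j i => u ^ wN j * A j i), b, ?_, ?_⟩
  · have : (Matrix.of (fun j i => u ^ wN j * A j i)).det = u ^ 6 * A.det := by
      simp [Matrix.det_fin_three, wN]; ring
    rw [this]
    exact (isUnit_iff_ne_zero.2 (pow_ne_zero _ hu)).mul hdet
  · intro i
    show β (θ (X i)) = _
    rw [haff i]
    simp only [Fin.sum_univ_three, map_add, map_mul, beta_C, beta_X hb, Matrix.of_apply]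
    simp only [wN, C_mul, Matrix.cons_val_zero, Matrix.cons_val_one, Matrix.head_cons,
      Matrix.cons_val_two, Matrix.tail_cons]
    ring

/-! ### The explicit computation for part 3 -/

def E1 : MvPolynomial (Fin 3) k :=
  -2*X 1^5 + 4*X 0*X 1^3*X 2 - 2*X 0^2*X 1*X 2^2 + 2*X 0^2*X 1^2 - 2*X 0^3*X 2

def E2 : MvPolynomial (Fin 3) k :=
  2*X 1^8*X 2 - 8*X 0*X 1^6*X 2^2 - 4*X 0*X 1^7 + 12*X 0^2*X 1^4*X 2^3 + 12*X 0^2*X 1^5*X 2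
  - 8*X 0^3*X 1^2*X 2^4 - 12*X 0^3*X 1^3*X 2^2 + 2*X 0^3*X 1^4 + 2*X 0^4*X 2^5
  + 4*X 0^4*X 1*X 2^3 - 4*X 0^4*X 1^2*X 2 + 2*X 0^5*X 2^2

set_option maxHeartbeats 2000000 in
lemma Del_X0 : Del (X 0 : MvPolynomial (Fin 3) k) = E1 := by
  simp [Del, fP, gP, E1, Matrix.det_fin_three, pderiv_ofNat]; ring

set_option maxHeartbeats 2000000 in
lemma Del_E1 : Del (E1 : MvPolynomial (Fin 3) k) = E2 := by
  simp [Del, fP, gP, E1, E2, Matrix.det_fin_three, pderiv_ofNat]; ring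

set_option maxHeartbeats 4000000 in
lemma Del_E2 : Del (E2 : MvPolynomial (Fin 3) k) = 0 := by
  simp [Del, fP, gP, E2, Matrix.det_fin_three, pderiv_ofNat]; ring

lemma Phi_not_affine [CharZero k]
    {Φ : k → (MvPolynomial (Fin 3) k ≃ₐ[k] MvPolynomial (Fin 3) k)}
    (hΦ : ∀ u : k, IsExpOf (fun h => u • Del h) (Φ u))
    (u : k) (hu : u ≠ 0) : ¬ IsAffine (Φ u) := by
  have h3 : Del^[3] (X 0 : MvPolynomial (Fin 3) k) = 0 := by
    show Del (Del (Del (X 0 : MvPolynomial (Fin 3) k))) = 0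
    rw [Del_X0, Del_E1, Del_E2]
  have e1 : Del^[1] (X 0 : MvPolynomial (Fin 3) k) = E1 := by
    rw [Function.iterate_one, Del_X0]
  have e2 : Del^[2] (X 0 : MvPolynomial (Fin 3) k) = E2 := by
    show Del (Del (X 0 : MvPolynomial (Fin 3) k)) = E2
    rw [Del_X0, Del_E1]
  have hform : Φ u (X 0) = (1 : k) • (X 0 : MvPolynomial (Fin 3) k)
      + u • E1 + (u ^ 2 * (2 : k)⁻¹) • E2 := by
    rw [Phi_apply (hΦ u) (X 0) 3 h3]
    norm_num [Finset.sum_range_succ, e1, e2, Del_X0, Nat.factorial]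
  rintro ⟨A, b, hdet, haff⟩
  have hAff : aeval (![1, 0, 0] : Fin 3 → k) (pderiv 1 (pderiv 1 (Φ u (X 0)))) = 0 := by
    rw [haff 0]
    simp [Fin.sum_univ_three]
  rw [hform] at hAff
  simp only [smul_eq_C_mul, map_add, pderiv_C_mul] at hAff
  simp [E1, E2, pderiv_ofNat] at hAff
  exact hu hAff

/-- `⟨φ, B⟩ ⊆ B ∘ {φ_u | u ∈ k}` (with `φ_0 = id`),
`⟨φ, B⟩ ∩ Aff_3(k) = B`, and `φ_u ∉ Aff_3(k)` for every `u ∈ k^*`. -/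
theorem statement4 [CharZero k]
    (hln : ∀ h : MvPolynomial (Fin 3) k, ∃ l : ℕ, Del^[l] h = 0)
    (Φ : k → (MvPolynomial (Fin 3) k ≃ₐ[k] MvPolynomial (Fin 3) k))
    (hΦ : ∀ u : k, IsExpOf (fun h => u • Del h) (Φ u)) :
    (∀ θ ∈ Subgroup.closure ({Φ 1} ∪ BSet), ∃ β ∈ BSet, ∃ u : k, θ = β * Φ u) ∧
    ({θ | θ ∈ Subgroup.closure ({Φ 1} ∪ BSet) ∧ IsAffine θ} = BSet) ∧
    (∀ u : k, u ≠ 0 → ¬ IsAffine (Φ u)) := by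
  have phi_zero : Φ 0 = 1 := AlgEquiv.ext (Phi_zero_apply hln (hΦ 0))
  have phi_add : ∀ (a b : k) h, Φ a (Φ b h) = Φ (a + b) h := Phi_add hln hΦ
  have part3 : ∀ u : k, u ≠ 0 → ¬ IsAffine (Φ u) := Phi_not_affine hΦ
  have part1 : ∀ θ ∈ Subgroup.closure ({Φ 1} ∪ BSet),
      ∃ β ∈ BSet, ∃ w : k, θ = β * Φ w := by
    intro θ hθ
    induction hθ using Subgroup.closure_induction with
    | mem x hx =>
      rcases hx with hx | hx
      · exact ⟨1, one_mem_BSet, 1, by rw [Set.mem_singleton_iff.1 hx, one_mul]⟩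
      · exact ⟨x, hx, 0, by rw [phi_zero, mul_one]⟩
    | one => exact ⟨1, one_mem_BSet, 0, by rw [phi_zero, mul_one]⟩
    | mul x y hx hy ihx ihy =>
      obtain ⟨β, hβ, w, rfl⟩ := ihx
      obtain ⟨β', hβ', w', rfl⟩ := ihy
      obtain ⟨u', hu', hb'⟩ := hβ'
      refine ⟨β * β', BSet_mul hβ ⟨u', hu', hb'⟩, w * (u'⁻¹) ^ 7 + w', ?_⟩
      refine AlgEquiv.ext fun p => ?_
      show β (Φ w (β' (Φ w' p))) = β (β' (Φ (w * u'⁻¹ ^ 7 + w') p))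
      rw [← phi_add (w * u'⁻¹ ^ 7) w' p,
        beta_Phi hln hΦ hu' hb' (w * u'⁻¹ ^ 7) (Φ w' p),
        show w * u'⁻¹ ^ 7 * u' ^ 7 = w by field_simp]
    | inv x hx ihx =>
      obtain ⟨β, hβ, w, rfl⟩ := ihx
      obtain ⟨u0, hu0, hb0⟩ := hβ
      have hbinv : β⁻¹ ∈ BSet := BSet_inv ⟨u0, hu0, hb0⟩
      obtain ⟨u1, hu1, hb1⟩ := hbinv
      have hbinv1 : IsBeta u1 β⁻¹ := hb1
      refine ⟨β⁻¹, ⟨u1, hu1, hb1⟩, -(w * u1⁻¹ ^ 7), ?_⟩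
      refine inv_eq_of_mul_eq_one_right ?_
      refine AlgEquiv.ext fun p => ?_
      show β (Φ w (β⁻¹ (Φ (-(w * u1⁻¹ ^ 7)) p))) = p
      rw [beta_Phi hln hΦ hu1 hbinv1 (-(w * u1⁻¹ ^ 7)) p,
        phi_add w (-(w * u1⁻¹ ^ 7) * u1 ^ 7) _,
        show w + -(w * u1⁻¹ ^ 7) * u1 ^ 7 = 0 by (field_simp; ring),
        phi_zero]
      rw [AlgEquiv.one_apply, ← AlgEquiv.mul_apply, mul_inv_cancel, AlgEquiv.one_apply]
  refine ⟨part1, ?_, part3⟩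
  ext θ
  constructor
  · rintro ⟨hmem, haff⟩
    obtain ⟨β, hβ, w, rfl⟩ := part1 _ hmem
    have haff2 : IsAffine (Φ w) := by
      have h2 : β⁻¹ * (β * Φ w) = Φ w := by group
      rw [← h2]
      exact mul_affine (BSet_inv hβ) haff
    have hw : w = 0 := by
      by_contra hw
      exact part3 w hw haff2
    rw [hw, phi_zero, mul_one]
    exact hβ
  · intro hβ
    exact ⟨Subgroup.subset_closure (Set.mem_union_right _ hβ), beta_affine hβ⟩

end YasudaPaper
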